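/- If G is a connected block-decomposable graph containing a node o of degree 8, then G is isomorphic to the graph obtained by gluing two square blocks at their centers; in particular G has exactly 9 nodes (the common center o of degree 8 and two disjoint 4-cycles of corners, each corner of degree 3, attached to o as in a square block). -/

import Mathlib

/-- The six block shapes: spike, triangle, infork, outfork, diamond, square. -/
inductive BlockShape : Type
  | spike | triangle | infork | outfork | diamond | square
  deriving DecidableEq

namespace BlockShape

/-- Number of nodes of each block shape. -/
def numNodes : BlockShape → ℕ
  | spike => 2
  | triangle => 3
  | infork => 3
  | outfork => 3
  | diamond => 4
  | square => 5

/-- The directed edges of each block shape.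
For the spike the nodes are `x = 0, y = 1` with edge `x → y`.
For the triangle the nodes are `0, 1, 2` with edges `0 → 1 → 2 → 0`.
For the infork the nodes are `x = 0, y = 1, c = 2` with edges `x → c`, `y → c`.
For the outfork the nodes are `x = 0, y = 1, c = 2` with edges `c → x`, `c → y`.
For the diamond the nodes are `p = 0, q = 1, x = 2, y = 3` with boundary edges
`p → x, x → q, q → y, y → p` and mid-edge `q → p`.
For the square the nodes are the center `c = 0` and corners `v1 = 1, …, v4 = 4`, with
edges `v1 → v2 → v3 → v4 → v1`, `c → v1`, `v2 → c`, `c → v3`, `v4 → c`. -/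
def edges : (s : BlockShape) → List (Fin s.numNodes × Fin s.numNodes)
  | spike => ([(0, 1)] : List (Fin 2 × Fin 2))
  | triangle => ([(0, 1), (1, 2), (2, 0)] : List (Fin 3 × Fin 3))
  | infork => ([(0, 2), (1, 2)] : List (Fin 3 × Fin 3))
  | outfork => ([(2, 0), (2, 1)] : List (Fin 3 × Fin 3))
  | diamond => ([(0, 2), (2, 1), (1, 3), (3, 0), (1, 0)] : List (Fin 4 × Fin 4))
  | square => ([(1, 2), (2, 3), (3, 4), (4, 1), (0, 1), (2, 0), (0, 3), (4, 0)] :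
      List (Fin 5 × Fin 5))

/-- The outlets (white nodes) of each block shape. -/
def IsOutlet : (s : BlockShape) → Fin s.numNodes → Prop
  | spike, _ => True
  | triangle, _ => True
  | infork, i => (i : ℕ) = 2
  | outfork, i => (i : ℕ) = 2
  | diamond, i => (i : ℕ) = 0 ∨ (i : ℕ) = 1
  | square, i => (i : ℕ) = 0

/-- The degree of a node inside its block (number of incident edges). -/
def blockDeg (s : BlockShape) (i : Fin s.numNodes) : ℕ :=
  s.edges.countP fun e => decide (e.1 = i) || decide (e.2 = i)

end BlockShape

/-- A directed multigraph on a vertex type `V` is given by its edge multiplicity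
function `G : V → V → ℕ`.  It is a directed graph in our sense if it has no loops
and no 2-cycles. -/
def IsDiGraph {V : Type} (G : V → V → ℕ) : Prop :=
  (∀ v, G v v = 0) ∧ ∀ x y, G x y = 0 ∨ G y x = 0

/-- Degree of a node: the number of incident edges counted with multiplicity. -/
def degree {V : Type} [Fintype V] (G : V → V → ℕ) (v : V) : ℕ :=
  ∑ w, (G v w + G w v)

/-- Two nodes are adjacent if some edge joins them (in either direction). -/
def Adj {V : Type} (G : V → V → ℕ) (x y : V) : Prop := 0 < G x y + G y x

/-- `Reach G x y` : `y` lies in the connected component of `x`. -/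
def Reach {V : Type} (G : V → V → ℕ) : V → V → Prop := Relation.ReflTransGen (Adj G)

/-- The connected component of a node, as a finset. -/
noncomputable def component {V : Type} [Fintype V] (G : V → V → ℕ) (v : V) : Finset V :=
  letI := Classical.decPred fun w => Reach G v w
  Finset.univ.filter (Reach G v)

/-- Total number of block edges mapped onto the ordered pair `(x, y)` by the gluing data. -/
def blockMult {V : Type} [DecidableEq V] (n : ℕ) (shape : Fin n → BlockShape)
    (emb : (b : Fin n) → Fin (shape b).numNodes → V) (x y : V) : ℕ :=
  ∑ b : Fin n, (shape b).edges.countP fun e => decide (emb b e.1 = x ∧ emb b e.2 = y)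

/-- A block decomposition of the directed multigraph `G` : a finite collection of blocks
together with an identification of their nodes with the nodes of `G` such that
* each block is embedded injectively,
* nodes of two distinct blocks may be identified only if both are outlets,
* each outlet is identified with at most one other outlet (no vertex lies in three blocks),
* every vertex of `G` comes from some block, and
* the multiplicity of each edge of `G` is the number of block edges giving it minus the
  number of block edges giving the reversed edge (two parallel edges with the same
  direction are kept as a double edge; two parallel edges with opposite directions
  annihilate each other). -/
structure BlockDecomposition {V : Type} [Fintype V] [DecidableEq V] (G : V → V → ℕ) :
    Type where
  n : ℕ
  shape : Fin n → BlockShape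
  emb : (b : Fin n) → Fin (shape b).numNodes → V
  emb_inj : ∀ b, Function.Injective (emb b)
  glue_outlets : ∀ (b c : Fin n) (i : Fin (shape b).numNodes) (j : Fin (shape c).numNodes),
    emb b i = emb c j → b ≠ c → (shape b).IsOutlet i ∧ (shape c).IsOutlet j
  atMostTwo : ∀ (b c d : Fin n) (i : Fin (shape b).numNodes) (j : Fin (shape c).numNodes)
    (k : Fin (shape d).numNodes), emb b i = emb c j → emb b i = emb d k →
    b = c ∨ b = d ∨ c = d
  covers : ∀ v : V, ∃ b i, emb b i = v
  edge_eq : ∀ x y : V, G x y = blockMult n shape emb x y - blockMult n shape emb y x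

/-- The number of block edges of a decomposition lying over the ordered pair `(x, y)`. -/
def BlockDecomposition.mult {V : Type} [Fintype V] [DecidableEq V] {G : V → V → ℕ}
    (D : BlockDecomposition G) : V → V → ℕ :=
  blockMult D.n D.shape D.emb

/-- A graph is (block-)decomposable if it admits a block decomposition. -/
def Decomposable {V : Type} [Fintype V] [DecidableEq V] (G : V → V → ℕ) : Prop :=
  Nonempty (BlockDecomposition G)

/-- The edge `e` of block `b` is annihilated in the decomposition `D` : some edge of
another block lies over the same pair of vertices with the opposite direction. -/
def BlockDecomposition.EdgeAnnihilated {V : Type} [Fintype V] [DecidableEq V]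
    {G : V → V → ℕ} (D : BlockDecomposition G) (b : Fin D.n)
    (e : Fin (D.shape b).numNodes × Fin (D.shape b).numNodes) : Prop :=
  e ∈ (D.shape b).edges ∧
    ∃ (c : Fin D.n) (f : Fin (D.shape c).numNodes × Fin (D.shape c).numNodes),
      c ≠ b ∧ f ∈ (D.shape c).edges ∧ D.emb c f.1 = D.emb b e.2 ∧ D.emb c f.2 = D.emb b e.1
/-- The graph obtained by gluing two square blocks at their centers: the common
center is `0`, the corners of the first square are `1,2,3,4` and those of the second
are `5,6,7,8`. -/
def doubleSquare : Fin 9 → Fin 9 → ℕ := fun x y =>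
  ([(1, 2), (2, 3), (3, 4), (4, 1), (0, 1), (2, 0), (0, 3), (4, 0),
    (5, 6), (6, 7), (7, 8), (8, 5), (0, 5), (6, 0), (0, 7), (8, 0)] :
      List (Fin 9 × Fin 9)).countP fun e => decide (e = (x, y))


section AuxLemmas

/-- Small decidable facts about block shapes. -/
lemma shape_deg_facts : ∀ (s : BlockShape) (i : Fin s.numNodes),
    s.blockDeg i ≤ 4 ∧ (s.blockDeg i = 4 → s = BlockShape.square ∧ (i : ℕ) = 0) := by
  intro s; cases s <;> decide

lemma shape_edge_ne : ∀ (s : BlockShape), ∀ e ∈ s.edges, e.1 ≠ e.2 := by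
  intro s; cases s <;> decide

lemma shape_deg_pos : ∀ (s : BlockShape) (i : Fin s.numNodes),
    ∃ e ∈ s.edges, e.1 = i ∨ e.2 = i := by
  intro s; cases s <;> decide

lemma shape_numNodes_pos : ∀ s : BlockShape, 0 < s.numNodes := by
  intro s; cases s <;> decide

lemma aux_sum_countP_fst {V α : Type} [Fintype V] [DecidableEq V] (l : List α)
    (p : α → Prop) [DecidablePred p] (H : α → V) :
    (∑ w : V, l.countP fun a => decide (p a ∧ H a = w)) = l.countP fun a => decide (p a) := by
  induction l with
  | nil => simp
  | cons a t ih =>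
    simp only [List.countP_cons, Finset.sum_add_distrib, ih]
    congr 1
    by_cases hp : p a
    · simp [hp]
    · simp [hp]

lemma aux_sum_countP_snd {V α : Type} [Fintype V] [DecidableEq V] (l : List α)
    (p : α → Prop) [DecidablePred p] (H : α → V) :
    (∑ w : V, l.countP fun a => decide (H a = w ∧ p a)) = l.countP fun a => decide (p a) := by
  induction l with
  | nil => simp
  | cons a t ih =>
    simp only [List.countP_cons, Finset.sum_add_distrib, ih]
    congr 1
    by_cases hp : p a
    · simp [hp]
    · simp [hp]

lemma aux_countP_add {α : Type} (l : List α) (p q : α → Bool)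
    (h : ∀ a ∈ l, ¬(p a = true ∧ q a = true)) :
    l.countP p + l.countP q = l.countP fun a => p a || q a := by
  induction l with
  | nil => simp
  | cons a t ih =>
    have h' : ∀ a ∈ t, ¬(p a = true ∧ q a = true) :=
      fun a ha => h a (List.mem_cons_of_mem _ ha)
    have ha := h a List.mem_cons_self
    simp only [List.countP_cons, ← ih h']
    by_cases hp : p a = true <;> by_cases hq : q a = true
    · exact absurd ⟨hp, hq⟩ ha
    · rw [Bool.not_eq_true] at hq; simp [hp, hq]; omega
    · rw [Bool.not_eq_true] at hp; simp [hp, hq]; omega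
    · rw [Bool.not_eq_true] at hp hq; simp [hp, hq]

lemma countP_edges_cast {V : Type} (s : BlockShape) (hs : s = BlockShape.square)
    (g : Fin s.numNodes → V) (h5 : (5 : ℕ) = s.numNodes) (p : V → V → Bool) :
    (s.edges.countP fun e => p (g e.1) (g e.2)) =
      BlockShape.square.edges.countP
        (fun e => p (g (Fin.cast h5 e.1)) (g (Fin.cast h5 e.2))) := by
  subst hs; rfl

lemma outlet_cast {s : BlockShape} (hs : s = BlockShape.square) (h5 : (5 : ℕ) = s.numNodes)
    (i : Fin 5) (hout : s.IsOutlet (Fin.cast h5 i)) : (i : ℕ) = 0 := by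
  subst hs; exact hout

end AuxLemmas

/-- Inclusion of the first square's nodes into `Fin 9`. -/
def iotaB : Fin 5 → Fin 9 := fun k => ⟨k.1, by have := k.isLt; omega⟩

/-- Inclusion of the second square's nodes into `Fin 9`. -/
def iotaC : Fin 5 → Fin 9 :=
  fun k => if k.1 = 0 then 0 else ⟨k.1 + 4, by have := k.isLt; omega⟩

/-- The multiplicity function of two squares glued along `iotaB`, `iotaC`. -/
def Msq : Fin 9 → Fin 9 → ℕ := fun p q =>
  (BlockShape.square.edges.countP fun e => decide (iotaB e.1 = p ∧ iotaB e.2 = q)) +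
  (BlockShape.square.edges.countP fun e => decide (iotaC e.1 = p ∧ iotaC e.2 = q))

lemma Msq_eq : ∀ p q : Fin 9, Msq p q - Msq q p = doubleSquare p q := by decide

lemma square_glue {V : Type} [Fintype V] [DecidableEq V] (G : V → V → ℕ) (o : V)
    (Eb Ec : Fin 5 → V)
    (hEbi : Function.Injective Eb) (hEci : Function.Injective Ec)
    (hEb0 : Eb 0 = o) (hEc0 : Ec 0 = o)
    (hsh : ∀ i j : Fin 5, Eb i = Ec j → (i : ℕ) = 0 ∧ (j : ℕ) = 0)
    (hcov : ∀ v : V, (∃ k, v = Eb k) ∨ (∃ k, v = Ec k))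
    (hedge : ∀ x y : V, G x y =
      ((BlockShape.square.edges.countP fun e => decide (Eb e.1 = x ∧ Eb e.2 = y)) +
       (BlockShape.square.edges.countP fun e => decide (Ec e.1 = x ∧ Ec e.2 = y))) -
      ((BlockShape.square.edges.countP fun e => decide (Eb e.1 = y ∧ Eb e.2 = x)) +
       (BlockShape.square.edges.countP fun e => decide (Ec e.1 = y ∧ Ec e.2 = x)))) :
    ∃ e : V ≃ Fin 9, e o = 0 ∧ ∀ x y : V, G x y = doubleSquare (e x) (e y) := by
  classical
  set f : Fin 9 → V := fun p =>
    if h : (p : ℕ) < 5 then Eb ⟨(p : ℕ), h⟩ else Ec ⟨(p : ℕ) - 4, by have := p.isLt; omega⟩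
    with hf
  have hfb : ∀ k : Fin 5, f (iotaB k) = Eb k := by
    intro k
    have h : ((iotaB k : Fin 9) : ℕ) < 5 := k.isLt
    simp only [hf, dif_pos h]
    congr 1
  have hfc : ∀ k : Fin 5, f (iotaC k) = Ec k := by
    intro k
    by_cases hk : k.1 = 0
    · have hk' : k = 0 := Fin.ext hk
      subst hk'
      have : iotaC 0 = 0 := by simp [iotaC]
      rw [this]
      show f 0 = Ec 0
      simp only [hf]
      rw [dif_pos (show ((0 : Fin 9) : ℕ) < 5 by norm_num)]
      rw [hEc0]
      convert hEb0 using 2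
      rfl
    · have : iotaC k = ⟨k.1 + 4, by have := k.isLt; omega⟩ := by simp [iotaC, hk]
      rw [this]
      simp only [hf]
      rw [dif_neg (by simp; omega)]
      congr 1
  have hfinj : Function.Injective f := by
    intro p q hpq
    simp only [hf] at hpq
    by_cases hp : (p : ℕ) < 5 <;> by_cases hq : (q : ℕ) < 5
    · rw [dif_pos hp, dif_pos hq] at hpq
      have h1 := hEbi hpq
      have h2 : (p : ℕ) = (q : ℕ) := by simpa [Fin.mk.injEq] using h1
      exact Fin.ext h2
    · rw [dif_pos hp, dif_neg hq] at hpq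
      have := hsh _ _ hpq
      simp only [Fin.val_mk] at this
      omega
    · rw [dif_neg hp, dif_pos hq] at hpq
      have := hsh _ _ hpq.symm
      simp only [Fin.val_mk] at this
      omega
    · rw [dif_neg hp, dif_neg hq] at hpq
      have := hEci hpq
      have := congrArg Fin.val this
      simp only [Fin.val_mk] at this
      have hp9 := p.isLt
      have hq9 := q.isLt
      exact Fin.ext (by omega)
  have hfsurj : Function.Surjective f := by
    intro v
    rcases hcov v with ⟨k, hk⟩ | ⟨k, hk⟩
    · exact ⟨iotaB k, by rw [hfb, hk]⟩
    · exact ⟨iotaC k, by rw [hfc, hk]⟩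
  have hbij : Function.Bijective f := ⟨hfinj, hfsurj⟩
  refine ⟨(Equiv.ofBijective f hbij).symm, ?_, ?_⟩
  · rw [Equiv.symm_apply_eq]
    show o = f 0
    simp only [hf]
    rw [dif_pos (show ((0 : Fin 9) : ℕ) < 5 by norm_num)]
    rw [← hEb0]
    congr 1
  · have key : ∀ p q : Fin 9, G (f p) (f q) = doubleSquare p q := by
      intro p q
      have cb : ∀ p q : Fin 9,
          (BlockShape.square.edges.countP fun e => decide (Eb e.1 = f p ∧ Eb e.2 = f q)) =
          BlockShape.square.edges.countP fun e => decide (iotaB e.1 = p ∧ iotaB e.2 = q) := by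
        intro p q
        apply List.countP_congr
        intro e _
        simp only [decide_eq_true_eq]
        rw [← hfb e.1, ← hfb e.2, hfinj.eq_iff, hfinj.eq_iff]
      have cc : ∀ p q : Fin 9,
          (BlockShape.square.edges.countP fun e => decide (Ec e.1 = f p ∧ Ec e.2 = f q)) =
          BlockShape.square.edges.countP fun e => decide (iotaC e.1 = p ∧ iotaC e.2 = q) := by
        intro p q
        apply List.countP_congr
        intro e _
        simp only [decide_eq_true_eq]
        rw [← hfc e.1, ← hfc e.2, hfinj.eq_iff, hfinj.eq_iff]
      rw [hedge, cb, cc, cb, cc]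
      exact Msq_eq p q
    intro x y
    have hx : f ((Equiv.ofBijective f hbij).symm x) = x :=
      (Equiv.ofBijective f hbij).apply_symm_apply x
    have hy : f ((Equiv.ofBijective f hbij).symm y) = y :=
      (Equiv.ofBijective f hbij).apply_symm_apply y
    have hk := key ((Equiv.ofBijective f hbij).symm x) ((Equiv.ofBijective f hbij).symm y)
    rw [hx, hy] at hk
    exact hk

/-- a connected block-decomposable graph with a node of degree 8 is
isomorphic to two square blocks glued at their centers (9 nodes). -/
theorem stmt_5 {V : Type} [Fintype V] [DecidableEq V] (G : V → V → ℕ)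
    (hG : IsDiGraph G) (hconn : ∀ x y : V, Reach G x y)
    (hdec : Decomposable G) (o : V) (ho : degree G o = 8) :
    ∃ e : V ≃ Fin 9, e o = 0 ∧ ∀ x y : V, G x y = doubleSquare (e x) (e y) := by
  classical
  obtain ⟨D⟩ := hdec
  have hGle : ∀ x y, G x y ≤ blockMult D.n D.shape D.emb x y := by
    intro x y; rw [D.edge_eq]; exact Nat.sub_le _ _
  set dA : Fin D.n → ℕ := fun d =>
    (D.shape d).edges.countP fun e => decide (D.emb d e.1 = o) || decide (D.emb d e.2 = o)
    with hdA
  -- the degree bound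
  have e1 : (∑ w : V, ∑ d : Fin D.n,
        (D.shape d).edges.countP fun e => decide (D.emb d e.1 = o ∧ D.emb d e.2 = w))
      = ∑ d : Fin D.n, ∑ w : V,
        (D.shape d).edges.countP fun e => decide (D.emb d e.1 = o ∧ D.emb d e.2 = w) :=
    Finset.sum_comm
  have e2 : (∑ w : V, ∑ d : Fin D.n,
        (D.shape d).edges.countP fun e => decide (D.emb d e.1 = w ∧ D.emb d e.2 = o))
      = ∑ d : Fin D.n, ∑ w : V,
        (D.shape d).edges.countP fun e => decide (D.emb d e.1 = w ∧ D.emb d e.2 = o) :=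
    Finset.sum_comm
  have h2 : (∑ w, (blockMult D.n D.shape D.emb o w + blockMult D.n D.shape D.emb w o))
      = ∑ d, dA d := by
    unfold blockMult
    rw [Finset.sum_add_distrib, e1, e2, ← Finset.sum_add_distrib]
    refine Finset.sum_congr rfl fun d _ => ?_
    simp only [hdA]
    have f1 := aux_sum_countP_fst (V := V) (D.shape d).edges
      (fun e => D.emb d e.1 = o) (fun e => D.emb d e.2)
    have f2 := aux_sum_countP_snd (V := V) (D.shape d).edges
      (fun e => D.emb d e.2 = o) (fun e => D.emb d e.1)
    have f3 := aux_countP_add (D.shape d).edges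
      (fun e => decide (D.emb d e.1 = o)) (fun e => decide (D.emb d e.2 = o))
      (by
        intro e he h
        exact shape_edge_ne (D.shape d) e he
          (D.emb_inj d ((of_decide_eq_true h.1).trans (of_decide_eq_true h.2).symm)))
    exact (congrArg₂ HAdd.hAdd f1 f2).trans f3
  have hS : 8 ≤ ∑ d, dA d := by
    have h1 : (∑ w, (G o w + G w o)) ≤
        ∑ w, (blockMult D.n D.shape D.emb o w + blockMult D.n D.shape D.emb w o) :=
      Finset.sum_le_sum fun w _ => add_le_add (hGle o w) (hGle w o)
    have h0 : degree G o = ∑ w, (G o w + G w o) := rfl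
    rw [← h2]
    omega
  have hdAle : ∀ d, dA d ≤ 4 ∧
      (dA d = 4 → D.shape d = BlockShape.square ∧ ∃ i, D.emb d i = o ∧ (i : ℕ) = 0) := by
    intro d
    by_cases h : ∃ i, D.emb d i = o
    · obtain ⟨i, hi⟩ := h
      have hc : dA d = (D.shape d).blockDeg i := by
        simp only [hdA]
        unfold BlockShape.blockDeg
        apply List.countP_congr
        intro e _
        simp only [Bool.or_eq_true, decide_eq_true_eq]
        rw [← hi]
        exact or_congr (D.emb_inj d).eq_iff (D.emb_inj d).eq_iff
      rw [hc]
      refine ⟨(shape_deg_facts _ i).1, fun h4 => ?_⟩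
      exact ⟨((shape_deg_facts _ i).2 h4).1, i, hi, ((shape_deg_facts _ i).2 h4).2⟩
    · have h0 : dA d = 0 := by
        simp only [hdA]
        apply List.countP_eq_zero.2
        intro e _
        simp only [Bool.or_eq_true, decide_eq_true_eq]
        push_neg at h
        rintro (h1 | h1)
        · exact h _ h1
        · exact h _ h1
      rw [h0]
      exact ⟨by omega, fun h4 => absurd h4 (by omega)⟩
  have hdApos : ∀ d (i : Fin (D.shape d).numNodes), D.emb d i = o → 0 < dA d := by
    intro d i hi
    obtain ⟨e, he, hor⟩ := shape_deg_pos (D.shape d) i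
    simp only [hdA]
    apply List.countP_pos_iff.2
    refine ⟨e, he, ?_⟩
    rcases hor with h | h <;> simp [h, hi]
  have hnode : ∀ d, 0 < dA d → ∃ i, D.emb d i = o := by
    intro d hd
    simp only [hdA] at hd
    obtain ⟨e, he, hp⟩ := List.countP_pos_iff.1 hd
    simp only [Bool.or_eq_true, decide_eq_true_eq] at hp
    rcases hp with h | h
    exacts [⟨_, h⟩, ⟨_, h⟩]
  set T : Finset (Fin D.n) := Finset.univ.filter (fun d => 0 < dA d) with hT
  have hTsum : ∑ d, dA d = ∑ d ∈ T, dA d := by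
    rw [hT]
    exact (Finset.sum_filter_of_ne fun d _ hne => Nat.pos_of_ne_zero hne).symm
  have hTcard : T.card ≤ 2 := by
    by_contra hcon
    push_neg at hcon
    obtain ⟨a, ha, b, hb, c, hc, hab, hac, hbc⟩ := Finset.two_lt_card.1 hcon
    obtain ⟨ia, hia⟩ := hnode a (Finset.mem_filter.1 ha).2
    obtain ⟨ib, hib⟩ := hnode b (Finset.mem_filter.1 hb).2
    obtain ⟨ic, hic⟩ := hnode c (Finset.mem_filter.1 hc).2
    rcases D.atMostTwo a b c ia ib ic (by rw [hia, hib]) (by rw [hia, hic]) with h | h | h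
    exacts [hab h, hac h, hbc h]
  have hTsum_le : ∑ d ∈ T, dA d ≤ 4 * T.card := by
    calc ∑ d ∈ T, dA d ≤ ∑ _d ∈ T, 4 := Finset.sum_le_sum fun d _ => (hdAle d).1
    _ = 4 * T.card := by simp [Finset.sum_const, smul_eq_mul, mul_comm]
  have hcard2 : T.card = 2 := by omega
  obtain ⟨b, c, hbc, hTbc⟩ := Finset.card_eq_two.1 hcard2
  have hsum_bc : dA b + dA c = ∑ d ∈ T, dA d := by rw [hTbc, Finset.sum_pair hbc]
  have hb4 : dA b = 4 := by
    have := (hdAle b).1; have := (hdAle c).1; omega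
  have hc4 : dA c = 4 := by
    have := (hdAle b).1; have := (hdAle c).1; omega
  obtain ⟨hsb, ib, hib, hib0⟩ := (hdAle b).2 hb4
  obtain ⟨hsc, ic, hic, hic0⟩ := (hdAle c).2 hc4
  have hout : ∀ d, d ≠ b → d ≠ c → ∀ i : Fin (D.shape d).numNodes, D.emb d i ≠ o := by
    intro d hdb hdc i hi
    have hdT : d ∈ T := by
      rw [hT]
      exact Finset.mem_filter.2 ⟨Finset.mem_univ _, hdApos d i hi⟩
    rw [hTbc] at hdT
    simp only [Finset.mem_insert, Finset.mem_singleton] at hdT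
    tauto
  have hnb : (5 : ℕ) = (D.shape b).numNodes := by rw [hsb]; rfl
  have hnc : (5 : ℕ) = (D.shape c).numNodes := by rw [hsc]; rfl
  set Eb : Fin 5 → V := fun k => D.emb b (Fin.cast hnb k) with hEb
  set Ec : Fin 5 → V := fun k => D.emb c (Fin.cast hnc k) with hEc
  have hEbinj : Function.Injective Eb := by
    intro x y h
    simp only [hEb] at h
    have h2 : Fin.cast hnb x = Fin.cast hnb y := D.emb_inj b h
    exact Fin.ext (by simpa [Fin.ext_iff] using h2)
  have hEcinj : Function.Injective Ec := by
    intro x y h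
    simp only [hEc] at h
    have h2 : Fin.cast hnc x = Fin.cast hnc y := D.emb_inj c h
    exact Fin.ext (by simpa [Fin.ext_iff] using h2)
  have hcb0 : Fin.cast hnb 0 = ib := Fin.ext (by simp [hib0])
  have hcc0 : Fin.cast hnc 0 = ic := Fin.ext (by simp [hic0])
  have hEb0 : Eb 0 = o := by
    simp only [hEb]; rw [hcb0, hib]
  have hEc0 : Ec 0 = o := by
    simp only [hEc]; rw [hcc0, hic]
  have hshared : ∀ i j : Fin 5, Eb i = Ec j → (i : ℕ) = 0 ∧ (j : ℕ) = 0 := by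
    intro i j h
    simp only [hEb, hEc] at h
    have hg := D.glue_outlets b c _ _ h hbc
    exact ⟨outlet_cast hsb hnb i hg.1, outlet_cast hsc hnc j hg.2⟩
  set InS : V → Prop := fun v => (∃ k, v = Eb k) ∨ (∃ k, v = Ec k) with hInS
  have hmemb : ∀ j : Fin (D.shape b).numNodes, InS (D.emb b j) := by
    intro j
    simp only [hInS, hEb]
    exact Or.inl ⟨Fin.cast hnb.symm j, by congr 1⟩
  have hmemc : ∀ j : Fin (D.shape c).numNodes, InS (D.emb c j) := by
    intro j
    simp only [hInS, hEc]
    exact Or.inr ⟨Fin.cast hnc.symm j, by congr 1⟩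
  have honly : ∀ d (i : Fin (D.shape d).numNodes), InS (D.emb d i) → d = b ∨ d = c := by
    intro d i hin
    by_contra hcon
    push_neg at hcon
    obtain ⟨hdb, hdc⟩ := hcon
    have ho' : D.emb d i = o := by
      simp only [hInS, hEb, hEc] at hin
      rcases hin with ⟨k, hk⟩ | ⟨k, hk⟩
      · have hg := D.glue_outlets d b i (Fin.cast hnb k) hk hdb
        have hk0 : (k : ℕ) = 0 := outlet_cast hsb hnb k hg.2
        have : Fin.cast hnb k = ib := Fin.ext (by simp [hk0, hib0])
        rw [hk, this, hib]
      · have hg := D.glue_outlets d c i (Fin.cast hnc k) hk hdc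
        have hk0 : (k : ℕ) = 0 := outlet_cast hsc hnc k hg.2
        have : Fin.cast hnc k = ic := Fin.ext (by simp [hk0, hic0])
        rw [hk, this, hic]
    exact hout d hdb hdc i ho'
  have hmpos : ∀ v w, 0 < blockMult D.n D.shape D.emb v w →
      ∃ d, ∃ e ∈ (D.shape d).edges, D.emb d e.1 = v ∧ D.emb d e.2 = w := by
    intro v w h
    unfold blockMult at h
    obtain ⟨d, _, hd⟩ := Finset.exists_ne_zero_of_sum_ne_zero h.ne'
    obtain ⟨e, he, hp⟩ := List.countP_pos_iff.1 (Nat.pos_of_ne_zero hd)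
    simp only [decide_eq_true_eq] at hp
    exact ⟨d, e, he, hp.1, hp.2⟩
  have hclosed : ∀ v w, InS v → Adj G v w → InS w := by
    intro v w hv hadj
    have hpos : 0 < blockMult D.n D.shape D.emb v w + blockMult D.n D.shape D.emb w v :=
      lt_of_lt_of_le hadj (add_le_add (hGle v w) (hGle w v))
    by_cases h1 : 0 < blockMult D.n D.shape D.emb v w
    · obtain ⟨d, e, he, hv', hw'⟩ := hmpos v w h1
      rcases honly d e.1 (by rw [hv']; exact hv) with rfl | rfl
      · rw [← hw']; exact hmemb e.2
      · rw [← hw']; exact hmemc e.2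
    · have h2' : 0 < blockMult D.n D.shape D.emb w v := by omega
      obtain ⟨d, e, he, hw', hv'⟩ := hmpos w v h2'
      rcases honly d e.2 (by rw [hv']; exact hv) with rfl | rfl
      · rw [← hw']; exact hmemb e.1
      · rw [← hw']; exact hmemc e.1
  have hcov : ∀ v, InS v := by
    intro v
    have hr := hconn o v
    induction hr with
    | refl => simp only [hInS]; exact Or.inl ⟨0, hEb0.symm⟩
    | tail _ hadj ih => exact hclosed _ _ ih hadj
  have hblocks : ∀ d, d = b ∨ d = c := by
    intro d
    exact honly d ⟨0, shape_numNodes_pos _⟩ (hcov _)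
  have huniv : (Finset.univ : Finset (Fin D.n)) = {b, c} := by
    ext d
    simp only [Finset.mem_univ, Finset.mem_insert, Finset.mem_singleton, true_iff]
    exact hblocks d
  have hmulteq : ∀ x y, blockMult D.n D.shape D.emb x y =
      (BlockShape.square.edges.countP fun e => decide (Eb e.1 = x ∧ Eb e.2 = y)) +
      (BlockShape.square.edges.countP fun e => decide (Ec e.1 = x ∧ Ec e.2 = y)) := by
    intro x y
    unfold blockMult
    rw [huniv, Finset.sum_pair hbc]
    congr 1
    · simp only [hEb]
      exact countP_edges_cast (D.shape b) hsb (D.emb b) hnb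
        (fun u v => decide (u = x ∧ v = y))
    · simp only [hEc]
      exact countP_edges_cast (D.shape c) hsc (D.emb c) hnc
        (fun u v => decide (u = x ∧ v = y))
  apply square_glue G o Eb Ec hEbinj hEcinj hEb0 hEc0 hshared
  · intro v
    have hv := hcov v
    simp only [hInS] at hv
    exact hv
  · intro x y
    rw [D.edge_eq, hmulteq, hmulteq]
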